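/- arXiv:2004.05073 — 4 statements merged into one kernel-verified Lean document; each statement's English description precedes it below -/
import Mathlib

section
/- Let H be a connected r-graph on n vertices. If H contains a Berge cycle of length at least ℓ(H)+1 (i.e. ℓ(H)+1 ≤ c(H)), then n = c(H). -/
namespace Berge

variable {V : Type*} [DecidableEq V] [Fintype V]

/-- `E` is the edge set of an `r`-uniform hypergraph (`r`-graph) on `V`. -/
def IsRGraph (r : ℕ) (E : Finset (Finset V)) : Prop :=
  ∀ e ∈ E, e.card = r

/-- The degree of a vertex: the number of edges containing it. -/
def deg (E : Finset (Finset V)) (x : V) : ℕ :=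
  (E.filter fun e => x ∈ e).card

/-- The minimum degree `δ₁`. -/
noncomputable def minDeg (E : Finset (Finset V)) : ℕ :=
  sInf {d | ∃ x : V, deg E x = d}

/-- A Berge path of length `t`: distinct vertices `v 0, ..., v t` and distinct edges
`f 0, ..., f (t-1)` (here `f i` plays the role of the edge `e_{i+1}` of the paper),
with `{v i, v (i+1)} ⊆ f i`. -/
def IsBergePath (E : Finset (Finset V)) (t : ℕ)
    (v : Fin (t + 1) → V) (f : Fin t → Finset V) : Prop :=
  Function.Injective v ∧ Function.Injective f ∧ (∀ i, f i ∈ E) ∧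
    ∀ i : Fin t, v i.castSucc ∈ f i ∧ v i.succ ∈ f i

/-- `H` is connected: any two vertices are connected by a Berge path. -/
def Connected (E : Finset (Finset V)) : Prop :=
  ∀ u w : V, ∃ (t : ℕ) (v : Fin (t + 1) → V) (f : Fin t → Finset V),
    IsBergePath E t v f ∧ v 0 = u ∧ v (Fin.last t) = w

/-- `ℓ(H)`: the length of a longest Berge path. -/
noncomputable def pathLen (E : Finset (Finset V)) : ℕ :=
  sSup {t | ∃ (v : Fin (t + 1) → V) (f : Fin t → Finset V), IsBergePath E t v f}

/-- A Berge cycle of length `t`: distinct vertices `v 0, ..., v (t-1)` and distinct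
edges `f 0, ..., f (t-1)` with `{v (i-1), v i} ⊆ f i` (indices mod `t`), equivalently
`v i ∈ f i` and `v i ∈ f (i+1)` for all `i`. -/
def IsBergeCycle (E : Finset (Finset V)) (t : ℕ)
    (v : Fin t → V) (f : Fin t → Finset V) : Prop :=
  Function.Injective v ∧ Function.Injective f ∧ (∀ i, f i ∈ E) ∧
    ∀ i : Fin t, v i ∈ f i ∧ v i ∈ f ⟨((i : ℕ) + 1) % t, Nat.mod_lt _ i.pos⟩

/-- `c(H)`: the length of a longest Berge cycle. -/
noncomputable def cycLen (E : Finset (Finset V)) : ℕ :=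
  sSup {t | ∃ (v : Fin t → V) (f : Fin t → Finset V), IsBergeCycle E t v f}

/-- `E^O(P, w)`: the edges of `H` outside `P` that contain `w`. -/
def EO (E : Finset (Finset V)) {t : ℕ} (f : Fin t → Finset V) (w : V) :
    Set (Finset V) :=
  {e | e ∈ E ∧ e ∉ Set.range f ∧ w ∈ e}

/-- `K(P, w)`: the key vertices of `P` other than `w` that lie on some edge of
`E^O(P, w)`.  For `w = v a` with `a ∈ {0, t}` this is `K_a(P)`; for `w ∉ K(P)` this
is `K_w(P)`. -/
def KsetP (E : Finset (Finset V)) {t : ℕ} (v : Fin (t + 1) → V)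
    (f : Fin t → Finset V) (w : V) : Set V :=
  {x | (∃ i, v i = x) ∧ x ≠ w ∧ ∃ e ∈ EO E f w, x ∈ e}

/-- `κ(P, w)`: the set of indices of the vertices in `K(P, w)` (as integers). -/
def kappa (E : Finset (Finset V)) {t : ℕ} (v : Fin (t + 1) → V)
    (f : Fin t → Finset V) (w : V) : Set ℤ :=
  {i : ℤ | ∃ j : Fin (t + 1), ((j : ℕ) : ℤ) = i ∧ v j ∈ KsetP E v f w}

/-- `E^I(P, w)`: the edges of `P` that contain `w`. -/
def EIset {t : ℕ} (f : Fin t → Finset V) (w : V) : Set (Finset V) :=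
  {e | e ∈ Set.range f ∧ w ∈ e}

/-- `ε^i(P, w)`: the (1-based, as in the paper) indices of the edges of `P`
containing `w`, as integers; so `i ∈ ε^i(P, w)` iff `w ∈ e_i = f (i-1)`. -/
def epsi {t : ℕ} (f : Fin t → Finset V) (w : V) : Set ℤ :=
  {i : ℤ | ∃ j : Fin t, ((j : ℕ) : ℤ) + 1 = i ∧ w ∈ f j}

/-- `N_H(x) = {T : T ∪ {x} ∈ E(H)}` (with `x ∉ T`). -/
def NH (E : Finset (Finset V)) (x : V) : Set (Finset V) :=
  {T | x ∉ T ∧ insert x T ∈ E}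

/-- The edge set of `S_r(n, k)` on the vertex set `V` (`|V| = n`), where `A ⊆ V` is
the distinguished `k`-set: all `r`-sets `e` with `|e ∩ (V \ A)| ≤ 1`. -/
def Sr (r : ℕ) (A : Finset V) : Finset (Finset V) :=
  Finset.univ.filter fun e : Finset V => e.card = r ∧ (e \ A).card ≤ 1

/-- The edge set of `S'_r(n, k)`: all `r`-sets `e` with `|e ∩ (V \ A)| = 1`. -/
def Sr' (r : ℕ) (A : Finset V) : Finset (Finset V) :=
  Finset.univ.filter fun e : Finset V => e.card = r ∧ (e \ A).card = 1

/-- The edge set of `S(sK^r_{k+1}, 1)` determined by the cliques `B 0, ..., B (s-1)`: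
all `r`-subsets of some `B i`. -/
def SK (r : ℕ) {s : ℕ} (B : Fin s → Finset V) : Finset (Finset V) :=
  Finset.univ.filter fun e : Finset V => e.card = r ∧ ∃ i, e ⊆ B i

/-- `H` is isomorphic to `S(sK^r_{k+1}, 1)`: there are `s` cliques of size `k+1`
pairwise meeting exactly in a common center `c` and covering `V`, and the edges of
`H` are exactly the `r`-subsets of the cliques. -/
def IsStarOfCliques (r k s : ℕ) (E : Finset (Finset V)) : Prop :=
  ∃ (c : V) (B : Fin s → Finset V),
    (∀ i, (B i).card = k + 1) ∧ (∀ i, c ∈ B i) ∧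
    (∀ i j, i ≠ j → B i ∩ B j = {c}) ∧
    Finset.univ.biUnion B = Finset.univ ∧
    E = SK r B


set_option linter.unusedSectionVars false
set_option maxHeartbeats 1000000

def LPath (E : Finset (Finset V)) (vs : List V) (es : List (Finset V)) : Prop :=
  vs.Nodup ∧ es.Nodup ∧ vs.length = es.length + 1 ∧ (∀ e ∈ es, e ∈ E) ∧
  ∀ k (hk1 : k + 1 < vs.length) (hk2 : k < es.length),
    vs[k] ∈ es[k] ∧ vs[k+1] ∈ es[k]

theorem LPath.take {E : Finset (Finset V)} {vs : List V} {es : List (Finset V)}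
    (h : LPath E vs es) (j : ℕ) (hj : j ≤ es.length) :
    LPath E (vs.take (j+1)) (es.take j) := by
  obtain ⟨hn1, hn2, hl, hE, hadj⟩ := h
  refine ⟨hn1.sublist (List.take_sublist _ _), hn2.sublist (List.take_sublist _ _), ?_,
    fun e he => hE e ((List.take_sublist _ _).mem he), ?_⟩
  · simp [List.length_take]; omega
  · intro k hk1 hk2
    simp only [List.length_take] at hk1 hk2
    have h1 : k + 1 < vs.length := by omega
    have h2 : k < es.length := by omega
    have := hadj k h1 h2
    simpa [List.getElem_take] using this

theorem LPath.glue {E : Finset (Finset V)} {vs1 vs2 : List V} {es1 es2 : List (Finset V)}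
    {g : Finset V}
    (h1 : LPath E vs1 es1) (h2 : LPath E vs2 es2) (hgE : g ∈ E)
    (hg1 : g ∉ es1) (hg2 : g ∉ es2)
    (hdisj : ∀ x ∈ vs1, x ∉ vs2)
    (hedisj : ∀ e ∈ es1, e ∉ es2)
    (hx : ∀ (h : vs1.length - 1 < vs1.length), vs1[vs1.length - 1] ∈ g)
    (hy : ∀ (h : 0 < vs2.length), vs2[0] ∈ g) :
    LPath E (vs1 ++ vs2) (es1 ++ g :: es2) := by
  obtain ⟨a1, a2, a3, a4, a5⟩ := h1
  obtain ⟨b1, b2, b3, b4, b5⟩ := h2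
  refine ⟨?_, ?_, ?_, ?_, ?_⟩
  · rw [List.nodup_append]
    exact ⟨a1, b1, fun a ha b hb hab => hdisj a ha (hab ▸ hb)⟩
  · rw [List.nodup_append]
    refine ⟨a2, b2.cons hg2, ?_⟩
    intro e he
    simp only [List.mem_cons]
    rintro _ (rfl | he2) rfl
    · exact hg1 he
    · exact hedisj e he he2
  · simp; omega
  · intro e he
    rcases List.mem_append.1 he with h | h
    · exact a4 e h
    · rcases List.mem_cons.1 h with rfl | h
      · exact hgE
      · exact b4 e h
  · intro k hk1 hk2
    simp only [List.length_append, List.length_cons] at hk1 hk2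
    rcases lt_trichotomy k es1.length with hlt | heq | hgt
    · have hkv : k + 1 < vs1.length := by omega
      have := a5 k hkv hlt
      rw [List.getElem_append_left (by omega), List.getElem_append_left (by omega),
        List.getElem_append_left (by omega)]
      exact this
    · subst heq
      have e1 : (es1 ++ g :: es2)[es1.length]'(by simp) = g := by
        rw [List.getElem_append_right (le_refl _)]
        simp
      rw [e1]
      constructor
      · rw [List.getElem_append_left (by omega)]
        have := hx (by omega)
        convert this using 2
        omega
      · rw [List.getElem_append_right (by omega)]
        have := hy (by omega)
        convert this using 2
        omega
    · obtain ⟨j, rfl⟩ : ∃ j, k = es1.length + 1 + j := ⟨k - es1.length - 1, by omega⟩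
      have hje : j + 1 < vs2.length := by omega
      have hje2 : j < es2.length := by omega
      have := b5 j hje hje2
      have e1 : (es1 ++ g :: es2)[es1.length + 1 + j]'(by simp; omega) = es2[j] := by
        rw [List.getElem_append_right (by omega)]
        have : es1.length + 1 + j - es1.length = j + 1 := by omega
        simp only [this, List.getElem_cons_succ]
      have e2 : (vs1 ++ vs2)[es1.length + 1 + j]'(by simp; omega) = vs2[j] := by
        rw [List.getElem_append_right (by omega)]
        congr 1
        omega
      have e3 : (vs1 ++ vs2)[es1.length + 1 + j + 1]'(by simp; omega) = vs2[j+1] := by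
        rw [List.getElem_append_right (by omega)]
        congr 1
        omega
      rw [e1, e2, e3]
      exact this

theorem lpath_of_bergePath {E : Finset (Finset V)} {t : ℕ} {v : Fin (t+1) → V}
    {f : Fin t → Finset V} (h : IsBergePath E t v f) :
    LPath E (List.ofFn v) (List.ofFn f) := by
  obtain ⟨hv, hf, hE, hadj⟩ := h
  refine ⟨List.nodup_ofFn.2 hv, List.nodup_ofFn.2 hf, by simp, ?_, ?_⟩
  · intro e he
    rcases List.mem_ofFn.1 he with ⟨i, rfl⟩
    exact hE i
  · intro k hk1 hk2
    simp only [List.length_ofFn] at hk1 hk2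
    simp only [List.getElem_ofFn]
    have := hadj ⟨k, hk2⟩
    constructor
    · convert this.1 using 2 <;> simp [Fin.castSucc]
    · convert this.2 using 2 <;> simp [Fin.succ]

theorem bergePath_of_lpath {E : Finset (Finset V)} {vs : List V} {es : List (Finset V)}
    (h : LPath E vs es) :
    ∃ (v : Fin (es.length + 1) → V) (f : Fin es.length → Finset V),
      IsBergePath E es.length v f := by
  obtain ⟨hn1, hn2, hl, hE, hadj⟩ := h
  refine ⟨fun i => vs[(i : ℕ)]'(by omega), fun i => es[(i : ℕ)], ?_, ?_, ?_, ?_⟩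
  · intro i j hij
    have := List.nodup_iff_injective_getElem.1 hn1
      (a₁ := ⟨i, by omega⟩) (a₂ := ⟨j, by omega⟩) hij
    exact Fin.ext (by simpa using congrArg Fin.val this)
  · intro i j hij
    have := List.nodup_iff_injective_getElem.1 hn2
      (a₁ := ⟨i, i.isLt⟩) (a₂ := ⟨j, j.isLt⟩) hij
    exact Fin.ext (by simpa using congrArg Fin.val this)
  · intro i; exact hE _ (List.getElem_mem _)
  · intro i
    have := hadj i (by omega) i.isLt
    exact ⟨this.1, this.2⟩

theorem cycle_rotate_lpath {E : Finset (Finset V)} {t : ℕ} (ht : 1 ≤ t)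
    {cv : List V} {ce : List (Finset V)}
    (hcvl : cv.length = t) (hcel : ce.length = t) (hcvn : cv.Nodup) (hcen : ce.Nodup)
    (hceE : ∀ e ∈ ce, e ∈ E)
    (hadj : ∀ k (hk : k < t), cv[k]'(by omega) ∈ ce[k]'(by omega) ∧
      cv[k]'(by omega) ∈ ce[(k+1) % t]'(by rw [hcel]; exact Nat.mod_lt _ (by omega)))
    (i : ℕ) (hi : i < t) :
    LPath E (cv.rotate i) ((ce.rotate (i+1)).take (t-1)) := by
  have hrl : (cv.rotate i).length = t := by simp [hcvl]
  have hrel : ((ce.rotate (i+1)).take (t-1)).length = t - 1 := by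
    simp [hcel]
  refine ⟨List.nodup_rotate.2 hcvn, (List.nodup_rotate.2 hcen).sublist (List.take_sublist _ _), ?_, ?_, ?_⟩
  · omega
  · intro e he
    exact hceE e (List.mem_rotate.1 ((List.take_sublist _ _).mem he))
  · intro k hk1 hk2
    rw [hrl] at hk1
    rw [hrel] at hk2
    have hv1 : (cv.rotate i)[k]'(by omega) = cv[(k + i) % t]'(by rw [hcvl]; exact Nat.mod_lt _ (by omega)) := by
      rw [List.getElem_rotate]
      simp [hcvl]
    have hv2 : (cv.rotate i)[k+1]'(by omega) = cv[(k + 1 + i) % t]'(by rw [hcvl]; exact Nat.mod_lt _ (by omega)) := by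
      rw [List.getElem_rotate]
      simp [hcvl]
    have he1 : ((ce.rotate (i+1)).take (t-1))[k]'(by omega) = ce[(k + i + 1) % t]'(by rw [hcel]; exact Nat.mod_lt _ (by omega)) := by
      rw [List.getElem_take, List.getElem_rotate]
      simp only [hcel]
      congr 1
    rw [hv1, hv2, he1]
    constructor
    · have h1 := (hadj ((k + i) % t) (Nat.mod_lt _ (by omega))).2
      have : ((k + i) % t + 1) % t = (k + i + 1) % t :=
        ((Nat.mod_modEq (k+i) t).add_right 1)
      convert h1 using 2
      omega
    · have h2 := (hadj ((k + 1 + i) % t) (Nat.mod_lt _ (by omega))).1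
      have heq : (k + 1 + i) % t = (k + i + 1) % t := by ring_nf
      convert h2 using 2 <;> omega

theorem mem_take_getElem {α : Type*} {l : List α} {n : ℕ} {x : α} (h : x ∈ l.take n) :
    ∃ k, ∃ hk : k < l.length, k < n ∧ l[k] = x := by
  obtain ⟨k, hk, hx⟩ := List.mem_iff_getElem.1 h
  simp only [List.length_take, lt_min_iff] at hk
  exact ⟨k, hk.2, hk.1, by rw [List.getElem_take] at hx; exact hx⟩

theorem not_mem_take_of_nodup {α : Type*} {l : List α} (h : l.Nodup) {j : ℕ}
    (hj : j < l.length) : l[j] ∉ l.take j := by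
  intro hmem
  obtain ⟨k, hk, hkj, hx⟩ := mem_take_getElem hmem
  have := List.nodup_iff_injective_getElem.1 h (a₁ := ⟨k, hk⟩) (a₂ := ⟨j, hj⟩) hx
  have : k = j := congrArg Fin.val this
  omega


theorem key_lemma {E : Finset (Finset V)} {t : ℕ} (ht : 1 ≤ t)
    {cv : List V} {ce : List (Finset V)}
    (hcvl : cv.length = t) (hcel : ce.length = t) (hcvn : cv.Nodup) (hcen : ce.Nodup)
    (hceE : ∀ e ∈ ce, e ∈ E)
    (hadj : ∀ k (hk : k < t), cv[k]'(by omega) ∈ ce[k]'(by omega) ∧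
      cv[k]'(by omega) ∈ ce[(k+1) % t]'(by rw [hcel]; exact Nat.mod_lt _ (by omega)))
    (u : V) (hu : u ∉ cv) (hconn : Connected E) :
    ∃ vs es, LPath E vs es ∧ t ≤ es.length := by
  classical
  -- Step 1: a path from u to a cycle vertex
  obtain ⟨p, v, f, hbp, hv0, hvl⟩ := hconn u (cv[0]'(by omega))
  have hlp0 := lpath_of_bergePath hbp
  have hvs0l : (List.ofFn v).length = p + 1 := by simp
  have hes0l : (List.ofFn f).length = p := by simp
  have hvs0_0 : ∀ h : 0 < (List.ofFn v).length, (List.ofFn v)[0] = u := by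
    intro h; rw [List.getElem_ofFn]; exact hv0
  have hvs0_p : ∀ h : p < (List.ofFn v).length, (List.ofFn v)[p] ∈ cv := by
    intro h; rw [List.getElem_ofFn]
    have : (⟨p, by omega⟩ : Fin (p+1)) = Fin.last p := rfl
    rw [this, hvl]
    exact List.getElem_mem _
  -- Step 2: the set of lengths of paths ending on the cycle
  set M : Set ℕ := {m | 1 ≤ m ∧ ∃ (pv : List V) (pe : List (Finset V)),
    LPath E pv pe ∧ pe.length = m ∧
    (∀ k, k < m → ∀ h2 : k < pv.length, pv[k] ∉ cv) ∧
    ∀ h : m < pv.length, pv[m] ∈ cv} with hM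
  have hMne : M.Nonempty := by
    set K : Set ℕ := {k | ∃ h : k < (List.ofFn v).length, (List.ofFn v)[k] ∈ cv} with hK
    have hpK : p ∈ K := ⟨by omega, hvs0_p _⟩
    have hKne : K.Nonempty := ⟨p, hpK⟩
    set k0 := sInf K with hk0
    have hk0K : k0 ∈ K := Nat.sInf_mem hKne
    obtain ⟨hk0lt, hk0cv⟩ := hk0K
    have hk0p : k0 ≤ p := Nat.sInf_le hpK
    have hk0pos : 1 ≤ k0 := by
      rcases Nat.eq_zero_or_pos k0 with h0 | h0
      · exfalso
        have h0' : (List.ofFn v)[k0]'(by omega) = u := by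
          have : ∀ k (h : k < (List.ofFn v).length), k = 0 → (List.ofFn v)[k] = u := by
            intro k h hk; subst hk; exact hvs0_0 h
          exact this k0 (by omega) h0
        rw [h0'] at hk0cv; exact hu hk0cv
      · exact h0
    have htake := hlp0.take k0 (by omega)
    refine ⟨k0, hk0pos, _, _, htake, by rw [List.length_take]; omega, ?_, ?_⟩
    · intro k hk h2
      have hkK : k ∉ K := Nat.notMem_of_lt_sInf (by omega)
      rw [List.getElem_take]
      intro hmem
      exact hkK ⟨by omega, hmem⟩
    · intro h
      rw [List.getElem_take]
      exact hk0cv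
  -- Step 3: a shortest such path
  have hmM : sInf M ∈ M := Nat.sInf_mem hMne
  set m := sInf M with hmdef
  obtain ⟨hm1, pv, pe, hpath, plen, hnotin, hlast⟩ := hmM
  have vlen : pv.length = m + 1 := by rw [hpath.2.2.1, plen]
  have hlastcv : pv[m]'(by omega) ∈ cv := hlast (by omega)
  have hpeE : ∀ j (hj : j < m), pe[j]'(by omega) ∈ E := by
    intro j hj; exact hpath.2.2.2.1 _ (List.getElem_mem _)
  -- Step 4: no inner edge of the path is a cycle edge
  have hfree : ∀ j (hj : j < m - 1), pe[j]'(by rw [plen]; omega) ∉ ce := by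
    intro j hj hmem
    obtain ⟨i, hi, hie⟩ := List.mem_iff_getElem.1 hmem
    have hit : i < t := by omega
    have htake := hpath.take j (by omega)
    have hsingle : LPath E [cv[i]'(by omega)] [] :=
      ⟨List.nodup_singleton _, List.nodup_nil, rfl, by simp, by intro k h1 h2; simp at h2⟩
    have hglue := htake.glue hsingle (hpeE j (by omega))
      (not_mem_take_of_nodup hpath.2.1 (by omega)) (by simp)
      ?_ (by simp) ?_ ?_
    · have : j + 1 ∈ M := by
        refine ⟨by omega, _, _, hglue, by simp [List.length_take]; omega, ?_, ?_⟩
        · intro k hk h2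
          have hlen1 : (pv.take (j+1)).length = j + 1 := by rw [List.length_take]; omega
          rw [List.getElem_append_left (by omega), List.getElem_take]
          exact hnotin k (by omega) (by omega)
        · intro h
          have hlen1 : (pv.take (j+1)).length = j + 1 := by rw [List.length_take]; omega
          rw [List.getElem_append_right (by omega)]
          have : j + 1 - (pv.take (j+1)).length = 0 := by omega
          simp only [this, List.getElem_singleton]
          exact List.getElem_mem _
      have := Nat.sInf_le this
      omega
    · -- disjointness of vertices
      intro x hx
      obtain ⟨k, hk, hkj, rfl⟩ := mem_take_getElem hx
      simp only [List.mem_singleton]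
      intro hEq
      refine hnotin k (by omega) hk ?_
      rw [hEq]
      exact List.getElem_mem _
    · -- last of vs1 in g
      intro h
      rw [List.getElem_take]
      have hadj' := (hpath.2.2.2.2 j (by omega) (by omega)).1
      convert hadj' using 2
      rw [List.length_take]; omega
    · -- head of vs2 in g
      intro h
      simp only [List.getElem_singleton]
      rw [← hie]
      exact (hadj i hit).1
  -- Step 5: decide the junction index
  obtain ⟨i, hit, hig, hnotrot⟩ : ∃ i, ∃ hi : i < t,
      cv[i]'(by omega) ∈ pe[m-1]'(by omega) ∧
      pe[m-1]'(by omega) ∉ (ce.rotate (i+1)).take (t-1) := by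
    by_cases hcase : pe[m-1]'(by omega) ∈ ce
    · obtain ⟨i, hi, hie⟩ := List.mem_iff_getElem.1 hcase
      refine ⟨i, by omega, by rw [← hie]; exact (hadj i (by omega)).1, ?_⟩
      intro hmem
      obtain ⟨s, hs, hst, hse⟩ := mem_take_getElem hmem
      rw [List.getElem_rotate, ← hie] at hse
      have hfin := List.nodup_iff_injective_getElem.1 hcen
        (a₁ := ⟨(s + (i+1)) % ce.length, by exact Nat.mod_lt _ (by omega)⟩)
        (a₂ := ⟨i, hi⟩) hse
      have heq : (s + (i + 1)) % ce.length = i := congrArg Fin.val hfin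
      rw [hcel] at heq
      have hslt : s < t - 1 := by
        have : ((ce.rotate (i+1)).take (t-1)).length = min (t-1) (ce.rotate (i+1)).length := List.length_take
        omega
      rcases Nat.lt_or_ge (s + (i+1)) t with hlt | hge
      · rw [Nat.mod_eq_of_lt hlt] at heq; omega
      · rw [Nat.mod_eq_sub_mod hge, Nat.mod_eq_of_lt (by omega)] at heq; omega
    · obtain ⟨i, hi, hie⟩ := List.mem_iff_getElem.1 hlastcv
      refine ⟨i, by omega, ?_,
        fun hmem => hcase (List.mem_rotate.1 ((List.take_sublist _ _).mem hmem))⟩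
      rw [hie]
      have hadj' := (hpath.2.2.2.2 (m-1) (by omega) (by omega)).2
      convert hadj' using 2
      omega
  have hrot := cycle_rotate_lpath ht hcvl hcel hcvn hcen hceE hadj i hit
  have hfinal := (hpath.take (m-1) (by omega)).glue hrot (hpeE (m-1) (by omega))
    (not_mem_take_of_nodup hpath.2.1 (by omega)) hnotrot ?_ ?_ ?_ ?_
  · refine ⟨_, _, hfinal, ?_⟩
    simp only [List.length_append, List.length_cons, List.length_take, List.length_rotate,
      hcel, vlen, hpath.2.2.1, plen]
    omega
  · -- vertex disjointness
    intro x hx hx2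
    obtain ⟨k, hk, hkm, rfl⟩ := mem_take_getElem hx
    exact hnotin k (by omega) hk (List.mem_rotate.1 hx2)
  · -- edge disjointness
    intro e he he2
    obtain ⟨jj, hjj, hjjm, rfl⟩ := mem_take_getElem he
    exact hfree jj (by omega) (List.mem_rotate.1 ((List.take_sublist _ _).mem he2))
  · -- last of vs1 in g
    intro h
    rw [List.getElem_take]
    have hadj' := (hpath.2.2.2.2 (m-1) (by omega) (by omega)).1
    convert hadj' using 2
    rw [List.length_take]; omega
  · -- head of vs2 in g
    intro h
    rw [List.getElem_rotate]
    convert hig using 2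
    rw [hcvl]
    rw [Nat.zero_add, Nat.mod_eq_of_lt hit]
/-- **Lemma (Statement 4).** Let `H` be a connected `r`-graph on `n` vertices.
If `ℓ(H) + 1 ≤ c(H)` then `n = c(H)`. -/
theorem card_eq_cycLen_of_pathLen_lt {V : Type*} [DecidableEq V] [Fintype V]
    (r n : ℕ) (hcard : Fintype.card V = n)
    (E : Finset (Finset V)) (hE : IsRGraph r E) (hconn : Connected E)
    (h : pathLen E + 1 ≤ cycLen E) :
    n = cycLen E := by
  classical
  set CS : Set ℕ := {t | ∃ (v : Fin t → V) (f : Fin t → Finset V), IsBergeCycle E t v f} with hCS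
  have hCSne : CS.Nonempty := by
    refine ⟨0, fun i => i.elim0, fun i => i.elim0, ?_, ?_, ?_, ?_⟩ <;>
      first
        | intro i; exact i.elim0
        | intro i j _; exact i.elim0
  have hCSbdd : BddAbove CS := by
    refine ⟨n, fun t ht => ?_⟩
    obtain ⟨v, f, hv, -⟩ := ht
    have := Fintype.card_le_of_injective v hv
    simpa [hcard] using this
  have hPSbdd : BddAbove {t | ∃ (v : Fin (t + 1) → V) (f : Fin t → Finset V), IsBergePath E t v f} := by
    refine ⟨n, fun t ht => ?_⟩
    obtain ⟨v, f, hv, -⟩ := ht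
    have := Fintype.card_le_of_injective v hv
    simp [hcard] at this
    omega
  set t := cycLen E with htdef
  have hmem : t ∈ CS := htdef ▸ Nat.sSup_mem hCSne hCSbdd
  obtain ⟨v, f, hcyc⟩ := hmem
  have ht1 : 1 ≤ t := by omega
  have htn : t ≤ n := by
    have := Fintype.card_le_of_injective v hcyc.1
    simpa [hcard] using this
  by_contra hne
  have htlt : t < n := by omega
  -- set up the cycle lists
  obtain ⟨hvinj, hfinj, hfE, hfadj⟩ := hcyc
  set cv : List V := List.ofFn v with hcv
  set ce : List (Finset V) := List.ofFn f with hce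
  have hcvl : cv.length = t := by simp [hcv]
  have hcel : ce.length = t := by simp [hce]
  have hcvn : cv.Nodup := List.nodup_ofFn.2 hvinj
  have hcen : ce.Nodup := List.nodup_ofFn.2 hfinj
  have hceE : ∀ e ∈ ce, e ∈ E := by
    intro e he
    rcases List.mem_ofFn.1 he with ⟨i, rfl⟩
    exact hfE i
  have hadj : ∀ k (hk : k < t), cv[k]'(by omega) ∈ ce[k]'(by omega) ∧
      cv[k]'(by omega) ∈ ce[(k+1) % t]'(by rw [hcel]; exact Nat.mod_lt _ (by omega)) := by
    intro k hk
    have := hfadj ⟨k, hk⟩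
    constructor
    · simp only [hcv, hce, List.getElem_ofFn]
      exact this.1
    · simp only [hcv, hce, List.getElem_ofFn]
      convert this.2 using 2
  -- a vertex off the cycle
  obtain ⟨u, hu⟩ : ∃ u : V, u ∉ cv := by
    by_contra hall
    push_neg at hall
    have hsub : (Finset.univ : Finset V) ⊆ cv.toFinset := by
      intro x _; exact List.mem_toFinset.2 (hall x)
    have := Finset.card_le_card hsub
    rw [Finset.card_univ, hcard, List.toFinset_card_of_nodup hcvn, hcvl] at this
    omega
  obtain ⟨vs, es, hlp, hlen⟩ := key_lemma ht1 hcvl hcel hcvn hcen hceE hadj u hu hconn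
  obtain ⟨v', f', hbp⟩ := bergePath_of_lpath hlp
  have hle : es.length ≤ pathLen E := le_csSup hPSbdd ⟨v', f', hbp⟩
  omega

end Berge
end

section
/- Let P be a longest Berge path in an r-graph H, with edges e_1,...,e_t and key vertices v_0,v_1,...,v_t (so t = ℓ(H)). Then for each a ∈ {0,t} and each edge e ∈ E^O_a(P), one has e \ {v_a} ⊆ K_a(P). -/
namespace Berge

variable {V : Type*} [DecidableEq V] [Fintype V]

lemma snoc_inj {n : ℕ} {α : Type*} {p : Fin n → α} {x : α}
    (hp : Function.Injective p) (hx : x ∉ Set.range p) :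
    Function.Injective (Fin.snoc p x : Fin (n+1) → α) := by
  intro i j hij
  induction i using Fin.lastCases with
  | last =>
    induction j using Fin.lastCases with
    | last => rfl
    | cast j =>
      rw [Fin.snoc_last, Fin.snoc_castSucc] at hij
      exact absurd ⟨j, hij.symm⟩ hx
  | cast i =>
    induction j using Fin.lastCases with
    | last =>
      rw [Fin.snoc_last, Fin.snoc_castSucc] at hij
      exact absurd ⟨i, hij⟩ hx
    | cast j =>
      rw [Fin.snoc_castSucc, Fin.snoc_castSucc] at hij
      exact congrArg Fin.castSucc (hp hij)

lemma path_card_le {V : Type*} [DecidableEq V] [Fintype V]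
    {E : Finset (Finset V)} {t : ℕ} {v : Fin (t+1) → V} {f : Fin t → Finset V}
    (h : IsBergePath E t v f) : t + 1 ≤ Fintype.card V := by
  simpa using Fintype.card_le_of_injective v h.1

/-- **Corollary (Statement 7).** Let `P` be a longest Berge path in an `r`-graph `H`,
with edges `f 0, ..., f (t-1)` and key vertices `v 0, ..., v t` (so `t = ℓ(H)`).
Then for `a ∈ {0, t}` and every `e ∈ E^O_a(P)`, we have `e \ {v a} ⊆ K_a(P)`. -/
theorem outside_edge_subset_Kset {V : Type*} [DecidableEq V] [Fintype V]
    (r t : ℕ) (E : Finset (Finset V)) (hE : IsRGraph r E)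
    (v : Fin (t + 1) → V) (f : Fin t → Finset V)
    (hP : IsBergePath E t v f) (hlong : pathLen E = t)
    (a : Fin (t + 1)) (ha : a = 0 ∨ a = Fin.last t) :
    ∀ e ∈ EO E f (v a), (↑(e.erase (v a)) : Set V) ⊆ KsetP E v f (v a) := by
  intro e he x hx
  obtain ⟨heE, hef, hvae⟩ := he
  simp only [Finset.coe_erase, Set.mem_diff, Finset.mem_coe, Set.mem_singleton_iff] at hx
  obtain ⟨hxe, hxne⟩ := hx
  refine ⟨?_, hxne, e, ⟨heE, hef, hvae⟩, hxe⟩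
  by_contra hkey
  push_neg at hkey
  have hxr : x ∉ Set.range v := by rintro ⟨i, hi⟩; exact hkey i hi
  obtain ⟨hvinj, hfinj, hfm, hcond⟩ := hP
  have her : e ∉ Set.range f := hef
  have hnew : ∃ (v' : Fin (t+1+1) → V) (f' : Fin (t+1) → Finset V),
      IsBergePath E (t+1) v' f' := by
    rcases ha with ha | ha
    · subst ha
      refine ⟨Fin.cons x v, Fin.cons e f, ?_, ?_, ?_, ?_⟩
      · exact Fin.cons_injective_iff.mpr ⟨hxr, hvinj⟩
      · exact Fin.cons_injective_iff.mpr ⟨her, hfinj⟩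
      · intro i
        induction i using Fin.cases with
        | zero => simpa using heE
        | succ j => simpa using hfm j
      · intro i
        induction i using Fin.cases with
        | zero =>
          refine ⟨by simpa using hxe, by simpa using hvae⟩
        | succ j =>
          constructor
          · rw [← Fin.succ_castSucc, Fin.cons_succ, Fin.cons_succ]
            exact (hcond j).1
          · rw [Fin.cons_succ, Fin.cons_succ]
            exact (hcond j).2
    · subst ha
      refine ⟨Fin.snoc v x, Fin.snoc f e, ?_, ?_, ?_, ?_⟩
      · exact snoc_inj hvinj hxr
      · exact snoc_inj hfinj her
      · intro i
        induction i using Fin.lastCases with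
        | last => simpa using heE
        | cast j => simpa using hfm j
      · intro i
        induction i using Fin.lastCases with
        | last =>
          constructor
          · rw [Fin.snoc_last, Fin.snoc_castSucc]
            exact hvae
          · rw [Fin.snoc_last, Fin.succ_last, Fin.snoc_last]
            exact hxe
        | cast j =>
          constructor
          · rw [Fin.snoc_castSucc, Fin.snoc_castSucc]
            exact (hcond j).1
          · rw [Fin.snoc_castSucc, Fin.succ_castSucc, Fin.snoc_castSucc]
            exact (hcond j).2
  obtain ⟨v', f', hp'⟩ := hnew
  have hmem : t + 1 ∈ {s | ∃ (v : Fin (s+1) → V) (f : Fin s → Finset V),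
      IsBergePath E s v f} := ⟨v', f', hp'⟩
  have hbdd : BddAbove {s | ∃ (v : Fin (s+1) → V) (f : Fin s → Finset V),
      IsBergePath E s v f} := by
    refine ⟨Fintype.card V, fun s hs => ?_⟩
    obtain ⟨v'', f'', h''⟩ := hs
    have := path_card_le h''
    omega
  have h1 : t + 1 ≤ pathLen E := le_csSup hbdd hmem
  omega


end Berge
end

section
/- Suppose k ≥ r ≥ 2, t ≤ 2k, and H is a connected r-graph on n vertices with ℓ(H) = t and n > t+1. Let P be a longest Berge path in H with edges e_1,...,e_t and key vertices v_0,v_1,...,v_t, and let v ∉ K(P). Then (κ_0(P) − 1) ∩ κ_t(P) = ∅, (κ_0(P) − 1) ∩ κ_v(P) = ∅, and (κ_t(P) + 1) ∩ κ_v(P) = ∅. -/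
namespace Berge

variable {V : Type*} [DecidableEq V] [Fintype V]

section Aux
set_option linter.unusedSectionVars false
set_option linter.unusedVariables false
set_option maxHeartbeats 1000000

variable {E : Finset (Finset V)} {t : ℕ} {v : Fin (t + 1) → V} {f : Fin t → Finset V}

lemma inc1' (hP : IsBergePath E t v f) (c d : ℕ) (hd : d < t) (hc : c < t + 1)
    (hcd : c = d) : v ⟨c, hc⟩ ∈ f ⟨d, hd⟩ := by
  subst hcd; have := (hP.2.2.2 ⟨c, hd⟩).1; rwa [Fin.castSucc_mk] at this

lemma inc2' (hP : IsBergePath E t v f) (c d : ℕ) (hd : d < t) (hc : c < t + 1)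
    (hcd : c = d + 1) : v ⟨c, hc⟩ ∈ f ⟨d, hd⟩ := by
  subst hcd; have := (hP.2.2.2 ⟨d, hd⟩).2; rwa [Fin.succ_mk] at this

lemma vmem {S : Finset V} {a : Fin (t + 1)} (h0 : v a ∈ S) (c : ℕ) (hc : c < t + 1)
    (h : c = (a : ℕ)) : v ⟨c, hc⟩ ∈ S := by
  have : (⟨c, hc⟩ : Fin (t + 1)) = a := Fin.ext h
  rw [this]; exact h0

lemma vmem' {S : Finset V} {a b : Fin (t + 1)} (h0 : v a ∈ S)
    (h : (b : ℕ) = (a : ℕ)) : v b ∈ S := by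
  rw [show b = a from Fin.ext h]; exact h0

lemma extend_front (hP : IsBergePath E t v f) {h : Finset V}
    (hhE : h ∈ E) (hhf : h ∉ Set.range f) {u : V} (hu : u ∉ Set.range v)
    (huh : u ∈ h) (h0 : v 0 ∈ h) :
    ∃ (v' : Fin (t + 1 + 1) → V) (f' : Fin (t + 1) → Finset V),
      IsBergePath E (t + 1) v' f' := by
  refine ⟨fun m => if hm : (m : ℕ) = 0 then u else v ⟨(m : ℕ) - 1, by
      have := m.isLt; omega⟩,
    fun m => if hm : (m : ℕ) = 0 then h else f ⟨(m : ℕ) - 1, by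
      have := m.isLt; omega⟩, ?_, ?_, ?_, ?_⟩
  · intro a b hab
    dsimp only at hab
    split_ifs at hab
    · exact Fin.ext (by omega)
    · exact absurd ⟨_, hab.symm⟩ hu
    · exact absurd ⟨_, hab⟩ hu
    · have := congrArg Fin.val (hP.1 hab); simp only [Fin.val_mk] at this
      exact Fin.ext (by omega)
  · intro a b hab
    dsimp only at hab
    split_ifs at hab
    · exact Fin.ext (by omega)
    · exact absurd ⟨_, hab.symm⟩ hhf
    · exact absurd ⟨_, hab⟩ hhf
    · have := congrArg Fin.val (hP.2.1 hab); simp only [Fin.val_mk] at this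
      exact Fin.ext (by omega)
  · intro i
    dsimp only
    split_ifs
    · exact hhE
    · exact hP.2.2.1 _
  · intro i
    have hc : ((i.castSucc : Fin (t + 1 + 1)) : ℕ) = (i : ℕ) := rfl
    have hs : ((i.succ : Fin (t + 1 + 1)) : ℕ) = (i : ℕ) + 1 := rfl
    constructor
    · dsimp only
      split_ifs
      · exact huh
      · exfalso; omega
      · exfalso; omega
      · exact inc1' hP _ _ _ _ (by omega)
    · dsimp only
      split_ifs
      · exact huh
      · exact vmem h0 _ _ (by simp only [Fin.val_zero]; omega)
      · exfalso; omega
      · exact inc2' hP _ _ _ _ (by omega)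

lemma rotate (hP : IsBergePath E t v f) {e : Finset V} (heE : e ∈ E)
    (he : e ∉ Set.range f) (j : ℕ) (hj1 : 1 ≤ j) (hjt : j ≤ t)
    (h0e : v 0 ∈ e) (hje : v ⟨j, by omega⟩ ∈ e) :
    ∃ (v' : Fin (t + 1) → V) (f' : Fin t → Finset V),
      IsBergePath E t v' f' ∧ v' 0 = v ⟨j - 1, by omega⟩ ∧
      v' (Fin.last t) = v (Fin.last t) ∧
      (∀ y, y ∉ Set.range v → y ∉ Set.range v') ∧
      (∀ h', h' ∉ Set.range f → h' ≠ e → h' ∉ Set.range f') := by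
  refine ⟨fun m => if hm : (m : ℕ) ≤ j - 1 then v ⟨j - 1 - (m : ℕ), by omega⟩ else v m,
    fun m => if hm : (m : ℕ) < j - 1 then f ⟨j - 2 - (m : ℕ), by omega⟩
      else if hm2 : (m : ℕ) = j - 1 then e else f m,
    ⟨?_, ?_, ?_, ?_⟩, ?_, ?_, ?_, ?_⟩
  · intro a b hab
    dsimp only at hab
    split_ifs at hab
    · have := congrArg Fin.val (hP.1 hab); simp only [Fin.val_mk] at this
      exact Fin.ext (by omega)
    · have := congrArg Fin.val (hP.1 hab); simp only [Fin.val_mk] at this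
      exact Fin.ext (by omega)
    · have := congrArg Fin.val (hP.1 hab); simp only [Fin.val_mk] at this
      exact Fin.ext (by omega)
    · exact hP.1 hab
  · intro a b hab
    dsimp only at hab
    split_ifs at hab
    · have := congrArg Fin.val (hP.2.1 hab); simp only [Fin.val_mk] at this
      exact Fin.ext (by omega)
    · exact absurd ⟨_, hab⟩ he
    · have := congrArg Fin.val (hP.2.1 hab); simp only [Fin.val_mk] at this
      exact Fin.ext (by omega)
    · exact absurd ⟨_, hab.symm⟩ he
    · exact Fin.ext (by omega)
    · exact absurd ⟨_, hab.symm⟩ he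
    · have := congrArg Fin.val (hP.2.1 hab); simp only [Fin.val_mk] at this
      exact Fin.ext (by omega)
    · exact absurd ⟨_, hab⟩ he
    · exact hP.2.1 hab
  · intro i
    dsimp only
    split_ifs
    · exact hP.2.2.1 _
    · exact heE
    · exact hP.2.2.1 _
  · intro i
    have hc : ((i.castSucc : Fin (t + 1)) : ℕ) = (i : ℕ) := rfl
    have hs : ((i.succ : Fin (t + 1)) : ℕ) = (i : ℕ) + 1 := rfl
    constructor
    · dsimp only
      split_ifs
      · exact inc2' hP _ _ _ _ (by omega)
      · exfalso; omega
      · exact vmem h0e _ _ (by simp only [Fin.val_zero]; omega)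
      · exfalso; omega
      · exfalso; omega
      · exact (hP.2.2.2 i).1
    · dsimp only
      split_ifs
      · exact inc1' hP _ _ _ _ (by omega)
      · exfalso; omega
      · exfalso; omega
      · exact vmem' hje (by simp only [Fin.val_mk]; omega)
      · exfalso; omega
      · exact (hP.2.2.2 i).2
  · dsimp only
    rw [dif_pos (by simp : (((0 : Fin (t + 1))) : ℕ) ≤ j - 1)]
    exact congrArg v (Fin.ext (by simp only [Fin.val_mk, Fin.val_zero]; omega))
  · dsimp only
    rw [dif_neg (by simp only [Fin.val_last]; omega : ¬ ((Fin.last t : Fin (t + 1)) : ℕ) ≤ j - 1)]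
  · intro y hy hy2
    obtain ⟨m, hm⟩ := hy2
    dsimp only at hm
    split_ifs at hm
    · exact hy ⟨_, hm⟩
    · exact hy ⟨_, hm⟩
  · intro h' hh' hne hy2
    obtain ⟨m, hm⟩ := hy2
    dsimp only at hm
    split_ifs at hm
    · exact hh' ⟨_, hm⟩
    · exact hne hm.symm
    · exact hh' ⟨_, hm⟩

/-- the vertex along the cycle, `ℕ`-indexed with wraparound -/
def cyclVert {t : ℕ} (v : Fin (t + 1) → V) (c : ℕ) : V :=
  if h : c ≤ t then v ⟨c, by omega⟩
  else if h2 : c - (t + 1) ≤ t then v ⟨c - (t + 1), by omega⟩ else v 0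

/-- the edge along the cycle between `cyclVert c` and `cyclVert (c+1)` -/
def cyclEdge {t : ℕ} (f : Fin t → Finset V) (g : Finset V) (c : ℕ) : Finset V :=
  if h : (if c ≤ t then c else c - (t + 1)) < t
    then f ⟨if c ≤ t then c else c - (t + 1), h⟩ else g

lemma cyclVert_low {c : ℕ} (h : c ≤ t) : cyclVert v c = v ⟨c, by omega⟩ := by
  unfold cyclVert; rw [dif_pos h]

lemma cyclVert_high {c : ℕ} (h1 : t + 1 ≤ c) (h2 : c ≤ 2 * t + 1) :
    cyclVert v c = v ⟨c - (t + 1), by omega⟩ := by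
  unfold cyclVert; rw [dif_neg (by omega), dif_pos (by omega)]

lemma cyclVert_mem_range (c : ℕ) : cyclVert v c ∈ Set.range v := by
  unfold cyclVert; split_ifs <;> exact ⟨_, rfl⟩

lemma cyclEdge_low {g : Finset V} {c : ℕ} (h : c < t) :
    cyclEdge f g c = f ⟨c, h⟩ := by
  unfold cyclEdge
  rw [if_pos (by omega : c ≤ t), dif_pos]

lemma cyclEdge_t {g : Finset V} : cyclEdge f g t = g := by
  unfold cyclEdge
  rw [if_pos (le_refl t), dif_neg (by omega)]

lemma cyclEdge_high {g : Finset V} {c : ℕ} (h1 : t + 1 ≤ c) (h : c - (t + 1) < t) :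
    cyclEdge f g c = f ⟨c - (t + 1), h⟩ := by
  unfold cyclEdge
  rw [if_neg (by omega), dif_pos]

lemma cyclEdge_mem {g : Finset V} (hf : ∀ i, f i ∈ E) (hgE : g ∈ E) (c : ℕ) :
    cyclEdge f g c ∈ E := by
  unfold cyclEdge; split_ifs
  all_goals first | exact hf _ | exact hgE

lemma cyclEdge_eq_g {g : Finset V} {c : ℕ} (h : c = t) : cyclEdge f g c = g := by
  subst h; exact cyclEdge_t

lemma chord_core (hP : IsBergePath E t v f) {g : Finset V} (hgE : g ∈ E)
    (hg : g ∉ Set.range f) (h0 : v 0 ∈ g) (hlast : v (Fin.last t) ∈ g)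
    {z : V} {q : Finset V} (hqE : q ∈ E) (hzq : z ∈ q) (hz : z ∉ Set.range v)
    (a : ℕ) (ha : a ≤ t) (hva : v ⟨a, by omega⟩ ∈ q)
    (hqg : q = g → a = 0) (hqf : ∀ c : Fin t, q = f c → a = (c : ℕ) + 1) :
    ∃ (w : Fin (t + 1 + 1) → V) (r : Fin (t + 1) → Finset V),
      IsBergePath E (t + 1) w r := by
  have hvl : ((Fin.last t : Fin (t + 1)) : ℕ) = t := rfl
  have hv0' : ((0 : Fin (t + 1)) : ℕ) = 0 := Fin.val_zero _
  refine ⟨fun m => if hm : (m : ℕ) = 0 then z else cyclVert v (a + (m : ℕ) - 1),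
    fun m => if hm : (m : ℕ) = 0 then q else cyclEdge f g (a + (m : ℕ) - 1),
    ?_, ?_, ?_, ?_⟩
  · intro m1 m2 heq
    have hm1 := m1.isLt
    have hm2 := m2.isLt
    dsimp only at heq
    split_ifs at heq with h1 h2 h2
    · exact Fin.ext (by omega)
    · have hr := cyclVert_mem_range (v := v) (a + (m2 : ℕ) - 1)
      rw [← heq] at hr
      exact absurd hr hz
    · have hr := cyclVert_mem_range (v := v) (a + (m1 : ℕ) - 1)
      rw [heq] at hr
      exact absurd hr hz
    · -- both nonzero
      by_cases hc1 : a + (m1 : ℕ) - 1 ≤ t <;> by_cases hc2 : a + (m2 : ℕ) - 1 ≤ t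
      · rw [cyclVert_low hc1, cyclVert_low hc2] at heq
        have := congrArg Fin.val (hP.1 heq); simp only [Fin.val_mk] at this
        exact Fin.ext (by omega)
      · rw [cyclVert_low hc1, cyclVert_high (by omega) (by omega)] at heq
        have := congrArg Fin.val (hP.1 heq); simp only [Fin.val_mk] at this
        exact Fin.ext (by omega)
      · rw [cyclVert_high (by omega) (by omega), cyclVert_low hc2] at heq
        have := congrArg Fin.val (hP.1 heq); simp only [Fin.val_mk] at this
        exact Fin.ext (by omega)
      · rw [cyclVert_high (by omega) (by omega),
            cyclVert_high (by omega) (by omega)] at heq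
        have := congrArg Fin.val (hP.1 heq); simp only [Fin.val_mk] at this
        exact Fin.ext (by omega)
  · intro m1 m2 heq
    have hm1 := m1.isLt
    have hm2 := m2.isLt
    dsimp only at heq
    split_ifs at heq with h1 h2 h2
    · exact Fin.ext (by omega)
    · -- q = cyclEdge (a + m2 - 1), m2 ≠ 0 : impossible
      exfalso
      rcases lt_trichotomy (a + (m2 : ℕ) - 1) t with hlt | heqt | hgt
      · rw [cyclEdge_low hlt] at heq
        have := hqf _ heq; simp only [Fin.val_mk] at this; omega
      · rw [cyclEdge_eq_g heqt] at heq
        have := hqg heq; omega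
      · rw [cyclEdge_high (by omega) (by omega)] at heq
        have := hqf _ heq
        simp only [Fin.val_mk] at this; omega
    · exfalso
      rcases lt_trichotomy (a + (m1 : ℕ) - 1) t with hlt | heqt | hgt
      · rw [cyclEdge_low hlt] at heq
        have := hqf _ heq.symm; simp only [Fin.val_mk] at this; omega
      · rw [cyclEdge_eq_g heqt] at heq
        have := hqg heq.symm; omega
      · rw [cyclEdge_high (by omega) (by omega)] at heq
        have := hqf _ heq.symm
        simp only [Fin.val_mk] at this; omega
    · rcases lt_trichotomy (a + (m1 : ℕ) - 1) t with hlt1 | heqt1 | hgt1 <;>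
        rcases lt_trichotomy (a + (m2 : ℕ) - 1) t with hlt2 | heqt2 | hgt2
      · rw [cyclEdge_low hlt1, cyclEdge_low hlt2] at heq
        have := congrArg Fin.val (hP.2.1 heq); simp only [Fin.val_mk] at this
        exact Fin.ext (by omega)
      · rw [cyclEdge_low hlt1, cyclEdge_eq_g heqt2] at heq
        exact absurd ⟨_, heq⟩ hg
      · rw [cyclEdge_low hlt1, cyclEdge_high (by omega) (by omega)] at heq
        have := congrArg Fin.val (hP.2.1 heq); simp only [Fin.val_mk] at this
        exact Fin.ext (by omega)
      · rw [cyclEdge_eq_g heqt1, cyclEdge_low hlt2] at heq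
        exact absurd ⟨_, heq.symm⟩ hg
      · exact Fin.ext (by omega)
      · rw [cyclEdge_eq_g heqt1, cyclEdge_high (by omega) (by omega)] at heq
        exact absurd ⟨_, heq.symm⟩ hg
      · rw [cyclEdge_high (by omega) (by omega), cyclEdge_low hlt2] at heq
        have := congrArg Fin.val (hP.2.1 heq); simp only [Fin.val_mk] at this
        exact Fin.ext (by omega)
      · rw [cyclEdge_high (by omega) (by omega), cyclEdge_eq_g heqt2] at heq
        exact absurd ⟨_, heq⟩ hg
      · rw [cyclEdge_high (by omega) (by omega),
            cyclEdge_high (by omega) (by omega)] at heq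
        have := congrArg Fin.val (hP.2.1 heq); simp only [Fin.val_mk] at this
        exact Fin.ext (by omega)
  · intro m
    dsimp only
    split_ifs
    · exact hqE
    · exact cyclEdge_mem hP.2.2.1 hgE _
  · intro i
    have hi := i.isLt
    have hcs : ((i.castSucc : Fin (t + 1 + 1)) : ℕ) = (i : ℕ) := rfl
    have hsu : ((i.succ : Fin (t + 1 + 1)) : ℕ) = (i : ℕ) + 1 := rfl
    constructor
    · dsimp only
      split_ifs
      · exact hzq
      · exfalso; omega
      · exfalso; omega
      · rcases lt_trichotomy (a + (i : ℕ) - 1) t with hlt | heqt | hgt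
        · rw [cyclVert_low (by omega), cyclEdge_low hlt]
          exact inc1' hP _ _ _ _ (by omega)
        · rw [cyclVert_low (by omega), cyclEdge_eq_g heqt]
          exact vmem hlast _ _ (by simp only [Fin.val_last]; omega)
        · rw [cyclVert_high (by omega) (by omega), cyclEdge_high (by omega) (by omega)]
          exact inc1' hP _ _ _ _ (by omega)
    · dsimp only
      split_ifs
      · exfalso; omega
      · rw [cyclVert_low (by omega)]
        exact vmem hva _ _ (by simp only [Fin.val_mk]; omega)
      · exfalso; omega
      · rcases lt_trichotomy (a + (i : ℕ) - 1) t with hlt | heqt | hgt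
        · rw [cyclVert_low (by omega), cyclEdge_low hlt]
          exact inc2' hP _ _ _ _ (by omega)
        · rw [cyclVert_high (by omega) (by omega), cyclEdge_eq_g heqt]
          exact vmem h0 _ _ (by simp only [Fin.val_zero]; omega)
        · rw [cyclVert_high (by omega) (by omega), cyclEdge_high (by omega) (by omega)]
          exact inc2' hP _ _ _ _ (by omega)


lemma no_longer {E : Finset (Finset V)} {t : ℕ} (hlen : pathLen E = t)
    {v' : Fin (t + 1 + 1) → V} {f' : Fin (t + 1) → Finset V}
    (h : IsBergePath E (t + 1) v' f') : False := by
  have hbdd : BddAbove {s | ∃ (w : Fin (s + 1) → V) (g : Fin s → Finset V),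
      IsBergePath E s w g} := by
    refine ⟨Fintype.card V, fun s hs => ?_⟩
    obtain ⟨w, g, hw⟩ := hs
    have h2 : s + 1 ≤ Fintype.card V := by
      simpa using Fintype.card_le_of_injective w hw.1
    omega
  have hmem : t + 1 ∈ {s | ∃ (w : Fin (s + 1) → V) (g : Fin s → Finset V),
      IsBergePath E s w g} := ⟨v', f', h⟩
  have hle := le_csSup hbdd hmem
  unfold pathLen at hlen
  omega

lemma reverse (hP : IsBergePath E t v f) :
    IsBergePath E t (fun m => v ⟨t - (m : ℕ), by have := m.isLt; omega⟩)
      (fun m => f ⟨t - 1 - (m : ℕ), by have := m.isLt; omega⟩) := by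
  refine ⟨?_, ?_, fun i => hP.2.2.1 _, ?_⟩
  · intro a b hab
    have ha := a.isLt; have hb := b.isLt
    have := congrArg Fin.val (hP.1 hab); simp only [Fin.val_mk] at this
    exact Fin.ext (by omega)
  · intro a b hab
    have ha := a.isLt; have hb := b.isLt
    have := congrArg Fin.val (hP.2.1 hab); simp only [Fin.val_mk] at this
    exact Fin.ext (by omega)
  · intro i
    have hi := i.isLt
    have hcs : ((i.castSucc : Fin (t + 1)) : ℕ) = (i : ℕ) := rfl
    have hsu : ((i.succ : Fin (t + 1)) : ℕ) = (i : ℕ) + 1 := rfl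
    constructor
    · dsimp only
      exact inc2' hP _ _ (by omega) (by omega) (by omega)
    · dsimp only
      exact inc1' hP _ _ (by omega) (by omega) (by omega)

lemma chord_absurd (hcard : t + 1 < Fintype.card V) (hconn : Connected E)
    (hlen : pathLen E = t) (hP : IsBergePath E t v f) {g : Finset V} (hgE : g ∈ E)
    (hg : g ∉ Set.range f) (h0 : v 0 ∈ g) (hlast : v (Fin.last t) ∈ g) : False := by
  classical
  have hns : ¬ Function.Surjective v := by
    intro hs
    have := Fintype.card_le_of_surjective v hs
    simp only [Fintype.card_fin] at this
    omega
  rw [Function.Surjective] at hns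
  push_neg at hns
  obtain ⟨u, hu⟩ := hns
  have hu' : u ∉ Set.range v := by rintro ⟨xx, hxx⟩; exact hu xx hxx
  obtain ⟨m, u', q', hQ, hQ0, hQl⟩ := hconn u (v 0)
  have hex : ∃ s, ∃ hsm : s < m + 1, u' ⟨s, hsm⟩ ∈ Set.range v := by
    refine ⟨m, by omega, ?_⟩
    rw [show (⟨m, by omega⟩ : Fin (m + 1)) = Fin.last m from Fin.ext (by simp)]
    rw [hQl]
    exact ⟨0, rfl⟩
  set s0 := Nat.find hex with hs0def
  obtain ⟨hs0m, b, hb⟩ := Nat.find_spec hex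
  have h0p : ¬ ∃ hsm : (0 : ℕ) < m + 1, u' ⟨0, hsm⟩ ∈ Set.range v := by
    rintro ⟨hh, xx, hxx⟩
    apply hu'
    refine ⟨xx, ?_⟩
    rw [hxx, show (⟨0, hh⟩ : Fin (m + 1)) = 0 from Fin.ext (by simp)]
    exact hQ0
  have hs0pos : 0 < s0 := by
    rcases Nat.eq_zero_or_pos s0 with h | h
    · exact absurd (h ▸ Nat.find_spec hex) h0p
    · exact h
  have hmin := Nat.find_min hex (show s0 - 1 < s0 by omega)
  have hs0m2 : s0 - 1 < m + 1 := by omega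
  have hzr : u' ⟨s0 - 1, hs0m2⟩ ∉ Set.range v := fun hr => hmin ⟨hs0m2, hr⟩
  have hm1 : 1 ≤ m := by
    by_contra hm0
    omega
  have hs0m' : s0 - 1 < m := by omega
  have hqE : q' ⟨s0 - 1, hs0m'⟩ ∈ E := hQ.2.2.1 _
  have hinc := hQ.2.2.2 ⟨s0 - 1, hs0m'⟩
  have hzq : u' ⟨s0 - 1, hs0m2⟩ ∈ q' ⟨s0 - 1, hs0m'⟩ := by
    have h1 := hinc.1
    rwa [Fin.castSucc_mk] at h1
  have hvq : u' ⟨s0, hs0m⟩ ∈ q' ⟨s0 - 1, hs0m'⟩ := by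
    have h2 := hinc.2
    rw [Fin.succ_mk] at h2
    have he2 : (⟨s0 - 1 + 1, by omega⟩ : Fin (m + 1)) = ⟨s0, hs0m⟩ :=
      Fin.ext (by simp only [Fin.val_mk]; omega)
    rwa [he2] at h2
  have hvb : v b ∈ q' ⟨s0 - 1, hs0m'⟩ := by rw [hb]; exact hvq
  by_cases hqg : q' ⟨s0 - 1, hs0m'⟩ = g
  · obtain ⟨w, r, hw⟩ := extend_front hP hgE hg hzr (by rwa [hqg] at hzq) h0
    exact no_longer hlen hw
  · by_cases hqf : ∃ c : Fin t, q' ⟨s0 - 1, hs0m'⟩ = f c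
    · obtain ⟨c, hcq⟩ := hqf
      have hcl := c.isLt
      have hva : v ⟨(c : ℕ) + 1, by omega⟩ ∈ q' ⟨s0 - 1, hs0m'⟩ := by
        rw [hcq]
        exact inc2' hP _ _ c.isLt (by omega) rfl
      obtain ⟨w, r, hw⟩ := chord_core hP hgE hg h0 hlast hqE hzq hzr
        ((c : ℕ) + 1) (by omega) hva (fun h => absurd h hqg)
        (fun c' h => by
          have h2 := congrArg Fin.val (hP.2.1 (hcq.symm.trans h)); omega)
      exact no_longer hlen hw
    · push_neg at hqf
      have hbl := b.isLt
      have hva : v ⟨(b : ℕ), by omega⟩ ∈ q' ⟨s0 - 1, hs0m'⟩ := by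
        rw [show (⟨(b : ℕ), by omega⟩ : Fin (t + 1)) = b from Fin.ext rfl]
        exact hvb
      obtain ⟨w, r, hw⟩ := chord_core hP hgE hg h0 hlast hqE hzq hzr
        (b : ℕ) (by omega) hva (fun h => absurd h hqg)
        (fun c h => absurd h (hqf c))
      exact no_longer hlen hw

lemma engine2 (hlen : pathLen E = t) (hP : IsBergePath E t v f) {x : V}
    (hx : x ∉ Set.range v) {e g : Finset V} (heE : e ∈ E) (he : e ∉ Set.range f)
    (hgE : g ∈ E) (hg : g ∉ Set.range f) (j : ℕ) (hj1 : 1 ≤ j) (hjt : j ≤ t)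
    (h0e : v 0 ∈ e) (hje : v ⟨j, by omega⟩ ∈ e) (hxg : x ∈ g)
    (hjg : v ⟨j - 1, by omega⟩ ∈ g) : False := by
  by_cases heg : e = g
  · subst heg
    obtain ⟨w, r, hw⟩ := extend_front hP heE he hx hxg h0e
    exact no_longer hlen hw
  · obtain ⟨v', f', hP', hv0, hvl, hrv, hrf⟩ := rotate hP heE he j hj1 hjt h0e hje
    have hg' : g ∉ Set.range f' := hrf g hg (fun h => heg h.symm)
    have h0g : v' 0 ∈ g := by rw [hv0]; exact hjg
    obtain ⟨w, r, hw⟩ := extend_front hP' hgE hg' (hrv x hx) hxg h0g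
    exact no_longer hlen hw

lemma engine1 (hcard : t + 1 < Fintype.card V) (hconn : Connected E)
    (hlen : pathLen E = t) (hP : IsBergePath E t v f) {e g : Finset V}
    (heE : e ∈ E) (he : e ∉ Set.range f) (hgE : g ∈ E) (hg : g ∉ Set.range f)
    (j : ℕ) (hj1 : 1 ≤ j) (hjt : j ≤ t) (h0e : v 0 ∈ e)
    (hje : v ⟨j, by omega⟩ ∈ e) (hlg : v (Fin.last t) ∈ g)
    (hjg : v ⟨j - 1, by omega⟩ ∈ g) : False := by
  by_cases heg : e = g
  · subst heg
    exact chord_absurd hcard hconn hlen hP heE he h0e hlg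
  · obtain ⟨v', f', hP', hv0, hvl, hrv, hrf⟩ := rotate hP heE he j hj1 hjt h0e hje
    have hg' : g ∉ Set.range f' := hrf g hg (fun h => heg h.symm)
    have h0g : v' 0 ∈ g := by rw [hv0]; exact hjg
    have hlgg : v' (Fin.last t) ∈ g := by rw [hvl]; exact hlg
    exact chord_absurd hcard hconn hlen hP' hgE hg' h0g hlgg


end Aux

/-- **Proposition (1.2) (Statement 10).** Suppose `k ≥ r ≥ 2`, `t ≤ 2k`, `H` is a
connected `r`-graph on `n > t+1` vertices with `ℓ(H) = t`, `P` is a longest Berge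
path with edges `f 0, ..., f (t-1)` and key vertices `v 0, ..., v t`, and
`x ∉ K(P)`. Then `(κ_0(P) - 1) ∩ κ_t(P) = ∅`, `(κ_0(P) - 1) ∩ κ_x(P) = ∅` and
`(κ_t(P) + 1) ∩ κ_x(P) = ∅`. -/
theorem kappa_shift_disjoint {V : Type*} [DecidableEq V] [Fintype V]
    (k r t n : ℕ) (hr2 : 2 ≤ r) (hkr : k ≥ r) (ht : t ≤ 2 * k)
    (hcard : Fintype.card V = n) (hn : n > t + 1)
    (E : Finset (Finset V)) (hE : IsRGraph r E) (hconn : Connected E)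
    (hlen : pathLen E = t)
    (v : Fin (t + 1) → V) (f : Fin t → Finset V) (hP : IsBergePath E t v f)
    (x : V) (hx : ∀ i, v i ≠ x) :
    {i : ℤ | i + 1 ∈ kappa E v f (v 0)} ∩ kappa E v f (v (Fin.last t)) = ∅ ∧
    {i : ℤ | i + 1 ∈ kappa E v f (v 0)} ∩ kappa E v f x = ∅ ∧
    {i : ℤ | i - 1 ∈ kappa E v f (v (Fin.last t))} ∩ kappa E v f x = ∅ := by
  have hcard' : t + 1 < Fintype.card V := by omega
  have hxr : x ∉ Set.range v := by rintro ⟨i0, hi0⟩; exact hx i0 hi0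
  refine ⟨?_, ?_, ?_⟩
  · apply Set.eq_empty_iff_forall_notMem.mpr
    rintro i ⟨hi1, hi2⟩
    obtain ⟨j, hj, -, hne, e, ⟨heE, hef, h0e⟩, hje⟩ := hi1
    obtain ⟨j', hj', -, hne', g, ⟨hgE, hgf, hlg⟩, hjg⟩ := hi2
    have hjj : (j : ℕ) = (j' : ℕ) + 1 := by omega
    have hjlt := j.isLt
    exact engine1 hcard' hconn hlen hP heE hef hgE hgf (j : ℕ) (by omega)
      (by omega) h0e (vmem hje _ _ rfl) hlg (vmem hjg _ _ (by omega))
  · apply Set.eq_empty_iff_forall_notMem.mpr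
    rintro i ⟨hi1, hi2⟩
    obtain ⟨j, hj, -, hne, e, ⟨heE, hef, h0e⟩, hje⟩ := hi1
    obtain ⟨j', hj', -, hne', g, ⟨hgE, hgf, hxg⟩, hjg⟩ := hi2
    have hjj : (j : ℕ) = (j' : ℕ) + 1 := by omega
    have hjlt := j.isLt
    exact engine2 hlen hP hxr heE hef hgE hgf (j : ℕ) (by omega) (by omega)
      h0e (vmem hje _ _ rfl) hxg (vmem hjg _ _ (by omega))
  · apply Set.eq_empty_iff_forall_notMem.mpr
    rintro i ⟨hi1, hi2⟩
    obtain ⟨j, hj, -, hneL, g, ⟨hgE, hgf, hlg⟩, hjg⟩ := hi1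
    obtain ⟨j', hj', -, hne', h, ⟨hhE, hhf, hxh⟩, hjh⟩ := hi2
    have hjj : (j' : ℕ) = (j : ℕ) + 1 := by omega
    have hjlt := j.isLt
    have hjne : (j : ℕ) ≠ t := fun hh =>
      hneL (congrArg v (Fin.ext (by simp only [Fin.val_last]; omega)))
    have hPr := reverse hP
    refine engine2 hlen hPr (x := x) ?_ hgE ?_ hhE ?_ (t - (j : ℕ))
      (by omega) (by omega) ?_ ?_ hxh ?_
    · rintro ⟨m, hm⟩; exact hxr ⟨_, hm⟩
    · rintro ⟨m, hm⟩; exact hgf ⟨_, hm⟩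
    · rintro ⟨m, hm⟩; exact hhf ⟨_, hm⟩
    · exact vmem hlg _ _ (by simp only [Fin.val_zero, Fin.val_last]; omega)
    · exact vmem hjg _ _ (by simp only [Fin.val_mk]; omega)
    · exact vmem hjh _ _ (by simp only [Fin.val_mk]; omega)

end Berge
end

section
/- Suppose k ≥ r ≥ 2, t ≤ 2k, and H is a connected r-graph on n vertices with ℓ(H) = t and n > t+1. Let P be a longest Berge path in H with edges e_1,...,e_t and key vertices v_0,v_1,...,v_t. Then (ε^i_0(P) − 1) ∩ κ_t(P) = ∅ and ε^i_t(P) ∩ κ_0(P) = ∅. -/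
namespace Berge

variable {V : Type*} [DecidableEq V] [Fintype V]

set_option linter.unusedSectionVars false

lemma per_mod {α : Type*} {U : ℕ → α} {m : ℕ} (hm : 0 < m)
    (hper : ∀ i, U (i + m) = U i) : ∀ i, U i = U (i % m) := by
  intro i
  induction i using Nat.strong_induction_on with
  | _ i ih =>
    rcases lt_or_ge i m with h | h
    · rw [Nat.mod_eq_of_lt h]
    · have h1 : i - m + m = i := by omega
      rw [← h1, hper, ih (i - m) (by omega), Nat.add_mod_right]

lemma mod_cancel {m c j1 j2 : ℕ} (h1 : j1 < m) (h2 : j2 < m)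
    (h : (c + j1) % m = (c + j2) % m) : j1 = j2 := by
  have := (Nat.ModEq.add_left_cancel' c (h : (c + j1) ≡ (c + j2) [MOD m]))
  rwa [Nat.ModEq, Nat.mod_eq_of_lt h1, Nat.mod_eq_of_lt h2] at this

lemma pathLen_ge (E : Finset (Finset V)) (s : ℕ) (v : Fin (s + 1) → V)
    (f : Fin s → Finset V) (h : IsBergePath E s v f) : s ≤ pathLen E := by
  apply le_csSup
  · refine ⟨Fintype.card V, fun s' hs' => ?_⟩
    obtain ⟨v', f', hP'⟩ := hs'
    have := Fintype.card_le_of_injective v' hP'.1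
    simp [Fintype.card_fin] at this
    omega
  · exact ⟨v, f, h⟩

lemma cycle_ext_path (E : Finset (Finset V)) (m : ℕ) (hm : 0 < m)
    (U : ℕ → V) (G : ℕ → Finset V)
    (hUper : ∀ i, U (i + m) = U i) (hGper : ∀ i, G (i + m) = G i)
    (hUinj : ∀ i j, i < m → j < m → U i = U j → i = j)
    (hGinj : ∀ i j, i < m → j < m → G i = G j → i = j)
    (hGE : ∀ i, G i ∈ E)
    (hinc : ∀ i, U i ∈ G i ∧ U (i + 1) ∈ G i)
    (x : V) (hx : ∀ i, U i ≠ x)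
    (a : ℕ) (h : Finset V) (hhE : h ∈ E) (hxh : x ∈ h) (hua : U a ∈ h)
    (hh : h = G a ∨ ∀ i, G i ≠ h) :
    ∃ (v' : Fin (m + 1) → V) (f' : Fin m → Finset V), IsBergePath E m v' f' := by
  have hUmod : ∀ i, U i = U (i % m) := per_mod hm hUper
  have hGmod : ∀ i, G i = G (i % m) := per_mod hm hGper
  have hUinj' : ∀ i j, U i = U j → i % m = j % m := by
    intro i j hij
    exact hUinj _ _ (Nat.mod_lt _ hm) (Nat.mod_lt _ hm)
      (by rw [← hUmod, ← hUmod]; exact hij)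
  have hGinj' : ∀ i j, G i = G j → i % m = j % m := by
    intro i j hij
    exact hGinj _ _ (Nat.mod_lt _ hm) (Nat.mod_lt _ hm)
      (by rw [← hGmod, ← hGmod]; exact hij)
  refine ⟨fun p => if (p : ℕ) < m then U (a + 1 + p) else x,
    fun p => if (p : ℕ) + 1 < m then G (a + 1 + p) else h, ?_, ?_, ?_, ?_⟩
  · -- injectivity of vertices
    intro p q hpq
    dsimp only at hpq
    by_cases hp : (p : ℕ) < m <;> by_cases hq : (q : ℕ) < m <;>
      simp only [hp, hq, if_true, if_false, if_pos, if_neg] at hpq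
    · have := mod_cancel hp hq (hUinj' _ _ hpq)
      exact Fin.ext this
    · exact absurd hpq (hx _)
    · exact absurd hpq.symm (hx _)
    · have : (p : ℕ) = m ∧ (q : ℕ) = m := ⟨by omega, by omega⟩
      exact Fin.ext (by omega)
  · -- injectivity of edges
    intro p q hpq
    dsimp only at hpq
    by_cases hp : (p : ℕ) + 1 < m <;> by_cases hq : (q : ℕ) + 1 < m <;>
      simp only [hp, hq, if_true, if_false, if_pos, if_neg] at hpq
    · exact Fin.ext (mod_cancel (by omega) (by omega) (hGinj' _ _ hpq))
    · rcases hh with hh | hh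
      · subst hh
        have h2 : (a + (1 + (p : ℕ))) % m = (a + 0) % m := by
          have := hGinj' _ _ hpq
          have e1 : a + 1 + (p : ℕ) = a + (1 + p) := by omega
          have e2 : a = a + 0 := by omega
          rw [← e1, ← e2]; exact this
        have := mod_cancel (by omega) hm h2
        omega
      · exact absurd hpq (hh _)
    · rcases hh with hh | hh
      · subst hh
        have h2 : (a + (1 + (q : ℕ))) % m = (a + 0) % m := by
          have := hGinj' _ _ hpq.symm
          have e1 : a + 1 + (q : ℕ) = a + (1 + q) := by omega
          have e2 : a = a + 0 := by omega
          rw [← e1, ← e2]; exact this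
        have := mod_cancel (by omega) hm h2
        omega
      · exact absurd hpq.symm (hh _)
    · have hp' := p.isLt
      have hq' := q.isLt
      exact Fin.ext (by omega)
  · -- edges in E
    intro p
    dsimp only
    split
    · exact hGE _
    · exact hhE
  · -- path incidences
    intro p
    have hpm : (p : ℕ) < m := p.isLt
    have hc : ((p.castSucc : Fin (m + 1)) : ℕ) = (p : ℕ) := rfl
    have hs : ((p.succ : Fin (m + 1)) : ℕ) = (p : ℕ) + 1 := rfl
    by_cases hp : (p : ℕ) + 1 < m
    · constructor
      · simp only [hc, hpm, if_true, hp, if_pos]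
        exact (hinc _).1
      · simp only [hs, hp, if_true, if_pos]
        have e1 : a + 1 + ((p : ℕ) + 1) = (a + 1 + p) + 1 := by omega
        rw [e1]
        exact (hinc _).2
    · constructor
      · simp only [hc, hpm, if_true, hp, if_false, if_neg, if_pos]
        have e1 : a + 1 + (p : ℕ) = a + m := by omega
        rw [e1, hUper]
        exact hua
      · dsimp only
        rw [Fin.val_succ, if_neg hp, if_neg hp]
        exact hxh

lemma cycle_pathLen (E : Finset (Finset V)) (m : ℕ) (hm : 0 < m)
    (hmV : m < Fintype.card V)
    (U : ℕ → V) (G : ℕ → Finset V)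
    (hUper : ∀ i, U (i + m) = U i) (hGper : ∀ i, G (i + m) = G i)
    (hUinj : ∀ i j, i < m → j < m → U i = U j → i = j)
    (hGinj : ∀ i j, i < m → j < m → G i = G j → i = j)
    (hGE : ∀ i, G i ∈ E)
    (hinc : ∀ i, U i ∈ G i ∧ U (i + 1) ∈ G i)
    (hconn : Connected E) : m ≤ pathLen E := by
  classical
  have hUmod : ∀ i, U i = U (i % m) := per_mod hm hUper
  have hGmod : ∀ i, G i = G (i % m) := per_mod hm hGper
  -- find a vertex outside the cycle
  obtain ⟨w, hw⟩ : ∃ w : V, ∀ i, U i ≠ w := by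
    by_contra hcon
    push_neg at hcon
    have hsub : (Finset.univ : Finset V) ⊆ (Finset.range m).image U := by
      intro w _
      obtain ⟨i, hi⟩ := hcon w
      exact Finset.mem_image.2 ⟨i % m, Finset.mem_range.2 (Nat.mod_lt _ hm),
        by rw [← hUmod]; exact hi⟩
    have h1 := Finset.card_le_card hsub
    have h2 := Finset.card_image_le (f := U) (s := Finset.range m)
    rw [Finset.card_univ, Finset.card_range] at *
    omega
  -- a path from w to the cycle
  obtain ⟨s, q, fq, hQ, hq0, hqlast⟩ := hconn w (U 0)
  set Pq : ℕ → Prop := fun jn => ∃ hj : jn < s + 1, ∃ b, b < m ∧ U b = q ⟨jn, hj⟩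
    with hPqdef
  have hex : ∃ jn, Pq jn := ⟨s, Nat.lt_succ_self s, 0, hm, hqlast.symm⟩
  let j₀ := Nat.find hex
  obtain ⟨hj₀lt, b, hbm, hUb⟩ : Pq j₀ := Nat.find_spec hex
  have hj₀le : j₀ ≤ s := Nat.find_min' hex ⟨Nat.lt_succ_self s, 0, hm, hqlast.symm⟩
  have hj₀pos : 0 < j₀ := by
    rcases Nat.eq_zero_or_pos j₀ with h0 | h0
    · exfalso
      have hP0 : Pq 0 := h0 ▸ (Nat.find_spec hex)
      obtain ⟨hj, b', hb', hUb'⟩ := hP0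
      apply hw b'
      rw [hUb', Fin.mk_zero, hq0]
    · exact h0
  have hlt : j₀ - 1 < s := by omega
  set x : V := q ⟨j₀ - 1, by omega⟩ with hxdef
  have hxnot : ∀ i, U i ≠ x := by
    intro i heq
    apply Nat.find_min hex (show j₀ - 1 < j₀ by omega)
    exact ⟨by omega, i % m, Nat.mod_lt _ hm, by rw [← hUmod]; exact heq⟩
  set gq : Finset V := fq ⟨j₀ - 1, hlt⟩ with hgqdef
  have hsucc : (⟨j₀ - 1, hlt⟩ : Fin s).succ = ⟨j₀, hj₀lt⟩ := by
    ext; simp [Fin.val_succ]; omega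
  have hinc' := hQ.2.2.2 ⟨j₀ - 1, hlt⟩
  have hx_gq : x ∈ gq := hinc'.1
  have hUb_gq : U b ∈ gq := by
    rw [hUb]
    have := hinc'.2
    rwa [hsucc] at this
  have hgqE : gq ∈ E := hQ.2.2.1 _
  have key : ∃ (v' : Fin (m + 1) → V) (f' : Fin m → Finset V),
      IsBergePath E m v' f' := by
    by_cases hcase : ∃ c, c < m ∧ G c = gq
    · obtain ⟨c, hcm, hGc⟩ := hcase
      exact cycle_ext_path E m hm U G hUper hGper hUinj hGinj hGE hinc x hxnot
        c gq hgqE hx_gq (by rw [← hGc]; exact (hinc c).1) (Or.inl hGc.symm)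
    · refine cycle_ext_path E m hm U G hUper hGper hUinj hGinj hGE hinc x hxnot
        b gq hgqE hx_gq hUb_gq (Or.inr ?_)
      intro i heq
      exact hcase ⟨i % m, Nat.mod_lt _ hm, by rw [← hGmod]; exact heq⟩
  obtain ⟨v', f', hP'⟩ := key
  exact pathLen_ge E m v' f' hP'

lemma core (E : Finset (Finset V)) {t : ℕ} (hconn : Connected E)
    (hlen : pathLen E = t) (hn : t + 1 < Fintype.card V)
    (v : Fin (t + 1) → V) (f : Fin t → Finset V) (hP : IsBergePath E t v f)
    (j : Fin t) (h0 : v 0 ∈ f j)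
    (e : Finset V) (heE : e ∈ E) (hef : ∀ i, f i ≠ e)
    (het : v (Fin.last t) ∈ e) (hej : v j.castSucc ∈ e) : False := by
  classical
  have hjt : (j : ℕ) < t := j.isLt
  have ht0 : 0 < t := by omega
  have hm : 0 < t + 1 := by omega
  -- the base cycle functions on [0, t+1)
  set u0 : ℕ → V := fun p =>
    if hp : p ≤ (j : ℕ) then v ⟨p, by omega⟩
    else if hp2 : p ≤ t then v ⟨t + (j : ℕ) + 1 - p, by omega⟩
    else v 0 with hu0def
  set g0 : ℕ → Finset V := fun p =>
    if hp : p < (j : ℕ) then f ⟨p, by omega⟩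
    else if hp2 : p = (j : ℕ) then e
    else if hp3 : p ≤ t then f ⟨t + (j : ℕ) - p, by omega⟩
    else e with hg0def
  -- values
  have hu0_le : ∀ p (hp : p ≤ (j : ℕ)), u0 p = v ⟨p, by omega⟩ := by
    intro p hp; rw [hu0def]; dsimp only; rw [dif_pos hp]
  have hu0_gt : ∀ p (hp : (j : ℕ) < p) (hp2 : p ≤ t),
      u0 p = v ⟨t + (j : ℕ) + 1 - p, by omega⟩ := by
    intro p hp hp2; rw [hu0def]; dsimp only; rw [dif_neg (by omega), dif_pos hp2]
  have hg0_lt : ∀ p (hp : p < (j : ℕ)), g0 p = f ⟨p, by omega⟩ := by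
    intro p hp; rw [hg0def]; dsimp only; rw [dif_pos hp]
  have hg0_eq : g0 (j : ℕ) = e := by
    rw [hg0def]; dsimp only; rw [dif_neg (by omega), dif_pos rfl]
  have hg0_gt : ∀ p (hp : (j : ℕ) < p) (hp2 : p ≤ t),
      g0 p = f ⟨t + (j : ℕ) - p, by omega⟩ := by
    intro p hp hp2; rw [hg0def]; dsimp only
    rw [dif_neg (by omega), dif_neg (by omega), dif_pos hp2]
  -- injectivity of u0 on [0, t+1)
  have hu0inj : ∀ p q, p < t + 1 → q < t + 1 → u0 p = u0 q → p = q := by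
    intro p q hp hq heq
    rcases le_or_gt p (j : ℕ) with h1 | h1 <;> rcases le_or_gt q (j : ℕ) with h2 | h2
    · rw [hu0_le p h1, hu0_le q h2] at heq
      have := congrArg Fin.val (hP.1 heq); simpa using this
    · rw [hu0_le p h1, hu0_gt q h2 (by omega)] at heq
      have := congrArg Fin.val (hP.1 heq); simp at this; omega
    · rw [hu0_gt p h1 (by omega), hu0_le q h2] at heq
      have := congrArg Fin.val (hP.1 heq); simp at this; omega
    · rw [hu0_gt p h1 (by omega), hu0_gt q h2 (by omega)] at heq
      have := congrArg Fin.val (hP.1 heq); simp at this; omega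
  -- injectivity of g0 on [0, t+1)
  have hg0inj : ∀ p q, p < t + 1 → q < t + 1 → g0 p = g0 q → p = q := by
    intro p q hp hq heq
    rcases lt_trichotomy p (j : ℕ) with h1 | h1 | h1 <;>
      rcases lt_trichotomy q (j : ℕ) with h2 | h2 | h2
    · rw [hg0_lt p h1, hg0_lt q h2] at heq
      have := congrArg Fin.val (hP.2.1 heq); simpa using this
    · rw [hg0_lt p h1, h2, hg0_eq] at heq; exact absurd heq (hef _)
    · rw [hg0_lt p h1, hg0_gt q h2 (by omega)] at heq
      have := congrArg Fin.val (hP.2.1 heq); simp at this; omega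
    · rw [h1, hg0_eq, hg0_lt q h2] at heq; exact absurd heq.symm (hef _)
    · omega
    · rw [h1, hg0_eq, hg0_gt q h2 (by omega)] at heq; exact absurd heq.symm (hef _)
    · rw [hg0_gt p h1 (by omega), hg0_lt q h2] at heq
      have := congrArg Fin.val (hP.2.1 heq); simp at this; omega
    · rw [h2, hg0_eq, hg0_gt p h1 (by omega)] at heq; exact absurd heq (hef _)
    · rw [hg0_gt p h1 (by omega), hg0_gt q h2 (by omega)] at heq
      have := congrArg Fin.val (hP.2.1 heq); simp at this; omega
  -- edges in E
  have hg0E : ∀ p, p < t + 1 → g0 p ∈ E := by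
    intro p hp
    rcases lt_trichotomy p (j : ℕ) with h1 | h1 | h1
    · rw [hg0_lt p h1]; exact hP.2.2.1 _
    · rw [h1, hg0_eq]; exact heE
    · rw [hg0_gt p h1 (by omega)]; exact hP.2.2.1 _
  -- incidences
  have hinc0 : ∀ p, p < t + 1 →
      u0 p ∈ g0 p ∧ u0 ((p + 1) % (t + 1)) ∈ g0 p := by
    intro p hp
    rcases lt_trichotomy p (j : ℕ) with h1 | h1 | h1
    · -- p < j
      have hmod : (p + 1) % (t + 1) = p + 1 := Nat.mod_eq_of_lt (by omega)
      constructor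
      · rw [hg0_lt p h1, hu0_le p (by omega)]
        exact (hP.2.2.2 ⟨p, by omega⟩).1
      · rw [hmod, hg0_lt p h1, hu0_le (p + 1) (by omega)]
        exact (hP.2.2.2 ⟨p, by omega⟩).2
    · -- p = j
      have hmod : (p + 1) % (t + 1) = p + 1 := Nat.mod_eq_of_lt (by omega)
      constructor
      · rw [h1, hg0_eq, hu0_le (j : ℕ) le_rfl]
        exact hej
      · rw [hmod, h1, hg0_eq, hu0_gt ((j : ℕ) + 1) (by omega) (by omega)]
        have harg : t + (j : ℕ) + 1 - ((j : ℕ) + 1) = t := by omega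
        simp only [harg]
        exact het
    · -- p > j
      rcases Nat.lt_or_ge p t with h2 | h2
      · have hmod : (p + 1) % (t + 1) = p + 1 := Nat.mod_eq_of_lt (by omega)
        constructor
        · rw [hg0_gt p h1 (by omega), hu0_gt p h1 (by omega)]
          have harg : t + (j : ℕ) + 1 - p = (t + (j : ℕ) - p) + 1 := by omega
          simp only [harg]
          exact (hP.2.2.2 ⟨t + (j : ℕ) - p, by omega⟩).2
        · rw [hmod, hg0_gt p h1 (by omega), hu0_gt (p + 1) (by omega) (by omega)]
          have harg : t + (j : ℕ) + 1 - (p + 1) = t + (j : ℕ) - p := by omega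
          simp only [harg]
          exact (hP.2.2.2 ⟨t + (j : ℕ) - p, by omega⟩).1
      · have hpt : p = t := by omega
        subst hpt
        have hmod : (p + 1) % (p + 1) = 0 := Nat.mod_self _
        constructor
        · rw [hg0_gt p h1 le_rfl, hu0_gt p h1 le_rfl]
          have harg : p + (j : ℕ) + 1 - p = (j : ℕ) + 1 := by omega
          have harg2 : p + (j : ℕ) - p = (j : ℕ) := by omega
          simp only [harg, harg2]
          exact (hP.2.2.2 ⟨(j : ℕ), by omega⟩).2
        · rw [hmod, hg0_gt p h1 le_rfl, hu0_le 0 (by omega)]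
          have harg2 : p + (j : ℕ) - p = (j : ℕ) := by omega
          simp only [harg2]
          have h00 : (⟨0, by omega⟩ : Fin (p + 1)) = 0 := rfl
          have hjj : (⟨(j : ℕ), by omega⟩ : Fin p) = j := rfl
          rw [h00, hjj]
          exact h0
  -- periodized versions
  set U : ℕ → V := fun p => u0 (p % (t + 1)) with hUdef
  set G : ℕ → Finset V := fun p => g0 (p % (t + 1)) with hGdef
  have hUper : ∀ i, U (i + (t + 1)) = U i := by
    intro i; rw [hUdef]; dsimp only; rw [Nat.add_mod_right]
  have hGper : ∀ i, G (i + (t + 1)) = G i := by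
    intro i; rw [hGdef]; dsimp only; rw [Nat.add_mod_right]
  have hUeq : ∀ p, p < t + 1 → U p = u0 p := by
    intro p hp; rw [hUdef]; dsimp only; rw [Nat.mod_eq_of_lt hp]
  have hGeq : ∀ p, p < t + 1 → G p = g0 p := by
    intro p hp; rw [hGdef]; dsimp only; rw [Nat.mod_eq_of_lt hp]
  have hUinj : ∀ p q, p < t + 1 → q < t + 1 → U p = U q → p = q := by
    intro p q hp hq heq
    rw [hUeq p hp, hUeq q hq] at heq
    exact hu0inj p q hp hq heq
  have hGinj : ∀ p q, p < t + 1 → q < t + 1 → G p = G q → p = q := by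
    intro p q hp hq heq
    rw [hGeq p hp, hGeq q hq] at heq
    exact hg0inj p q hp hq heq
  have hGE : ∀ i, G i ∈ E := by
    intro i; rw [hGdef]; exact hg0E _ (Nat.mod_lt _ hm)
  have hincU : ∀ i, U i ∈ G i ∧ U (i + 1) ∈ G i := by
    intro i
    have h1 : (i + 1) % (t + 1) = (i % (t + 1) + 1) % (t + 1) := by
      rw [Nat.add_mod i 1 (t + 1), Nat.mod_eq_of_lt (show 1 < t + 1 by omega)]
    have h2 := hinc0 (i % (t + 1)) (Nat.mod_lt _ hm)
    constructor
    · rw [hUdef, hGdef]; exact h2.1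
    · rw [hUdef, hGdef]; dsimp only; rw [h1]; exact h2.2
  have := cycle_pathLen E (t + 1) hm (by omega) U G hUper hGper hUinj hGinj
    hGE hincU hconn
  omega

lemma reverse_path (E : Finset (Finset V)) {t : ℕ} (v : Fin (t + 1) → V)
    (f : Fin t → Finset V) (hP : IsBergePath E t v f) :
    IsBergePath E t (fun i => v i.rev) (fun i => f i.rev) := by
  obtain ⟨hv, hf, hfE, hinc⟩ := hP
  refine ⟨fun a b hab => ?_, fun a b hab => ?_, fun i => hfE _, fun i => ?_⟩
  · have := hv hab
    have h2 := congrArg Fin.val this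
    simp only [Fin.val_rev] at h2
    have ha := a.isLt; have hb := b.isLt
    exact Fin.ext (by omega)
  · have := hf hab
    have h2 := congrArg Fin.val this
    simp only [Fin.val_rev] at h2
    have ha := a.isLt; have hb := b.isLt
    exact Fin.ext (by omega)
  · have hi := i.isLt
    have e1 : i.castSucc.rev = i.rev.succ := by
      apply Fin.ext
      simp only [Fin.val_rev, Fin.coe_castSucc, Fin.val_succ]
      omega
    have e2 : i.succ.rev = i.rev.castSucc := by
      apply Fin.ext
      simp only [Fin.val_rev, Fin.coe_castSucc, Fin.val_succ]
      omega
    dsimp only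
    rw [e1, e2]
    exact ⟨(hinc i.rev).2, (hinc i.rev).1⟩

/-- **Proposition (1.3) (Statement 11).** Suppose `k ≥ r ≥ 2`, `t ≤ 2k`, `H` is a
connected `r`-graph on `n > t+1` vertices with `ℓ(H) = t`, and `P` is a longest
Berge path with edges `f 0, ..., f (t-1)` and key vertices `v 0, ..., v t`. Then
`(ε^i_0(P) - 1) ∩ κ_t(P) = ∅` and `ε^i_t(P) ∩ κ_0(P) = ∅`. -/
theorem epsi_shift_kappa_disjoint {V : Type*} [DecidableEq V] [Fintype V]
    (k r t n : ℕ) (hr2 : 2 ≤ r) (hkr : k ≥ r) (ht : t ≤ 2 * k)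
    (hcard : Fintype.card V = n) (hn : n > t + 1)
    (E : Finset (Finset V)) (hE : IsRGraph r E) (hconn : Connected E)
    (hlen : pathLen E = t)
    (v : Fin (t + 1) → V) (f : Fin t → Finset V) (hP : IsBergePath E t v f) :
    {i : ℤ | i + 1 ∈ epsi f (v 0)} ∩ kappa E v f (v (Fin.last t)) = ∅ ∧
    epsi f (v (Fin.last t)) ∩ kappa E v f (v 0) = ∅ := by
  have hnV : t + 1 < Fintype.card V := by omega
  constructor
  · rw [Set.eq_empty_iff_forall_notMem]
    rintro i ⟨hmem1, hmem2⟩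
    obtain ⟨jf, hjf1, hjf2⟩ := hmem1
    obtain ⟨jv, hjv1, ⟨-, hne, ex, ⟨heE, henr, hwl⟩, hxe⟩⟩ := hmem2
    have hval : (jv : ℕ) = (jf : ℕ) := by omega
    have hjveq : jv = jf.castSucc := by
      apply Fin.ext
      rw [Fin.coe_castSucc]
      exact hval
    refine core E hconn hlen hnV v f hP jf hjf2 ex heE
      (fun i hi => henr ⟨i, hi⟩) hwl ?_
    rw [← hjveq]
    exact hxe
  · rw [Set.eq_empty_iff_forall_notMem]
    rintro i ⟨hmem1, hmem2⟩
    obtain ⟨jf, hjf1, hjf2⟩ := hmem1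
    obtain ⟨jv, hjv1, ⟨-, hne, ex, ⟨heE, henr, hw0⟩, hxe⟩⟩ := hmem2
    have hval : (jv : ℕ) = (jf : ℕ) + 1 := by omega
    have hjt : (jf : ℕ) < t := jf.isLt
    have hPr := reverse_path E v f hP
    refine core E hconn hlen hnV _ _ hPr jf.rev ?_ ex heE
      (fun i hi => henr ⟨i.rev, hi⟩) ?_ ?_
    · have e1 : (jf.rev).rev = jf := Fin.rev_rev jf
      have e2 : (0 : Fin (t + 1)).rev = Fin.last t := by
        apply Fin.ext
        simp [Fin.val_rev]
      rw [e1, e2]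
      exact hjf2
    · have e2 : (Fin.last t).rev = 0 := by
        apply Fin.ext
        simp [Fin.val_rev]
      rw [e2]
      exact hw0
    · have e3 : (jf.rev.castSucc).rev = jv := by
        apply Fin.ext
        simp only [Fin.val_rev, Fin.coe_castSucc]
        omega
      rw [e3]
      exact hxe

end Berge
end
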